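/- arXiv:1402.4183 — 4 statements merged into one kernel-verified Lean document; each statement's English description precedes it below -/
import Mathlib

section
/- Let x be an assignment of n terminal nodes to k hubs, i.e., x_{is} ∈ {0,1} with Σ_s x_{is} = 1 for each i, and let Y^i_{st} (for s ≠ t) be the flow from city i routed from hub s to hub t, defined by Y^i_{st} = x_{is} · Σ_{j} d_{ij} x_{jt}. Then for every city i and hub s: Σ_{t≠s} Y^i_{st} + Σ_{t≠s} Y^i_{ts} = Σ_j d_{ij} |x_{is} − x_{js}|. -/
open Finset

/-- Lemma 1 (flow identity): for the canonical flows
`Y i s t = x i s * ∑ j, d i j * x j t` (for `s ≠ t`), the total flow through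
hub `s` originated at city `i` equals `∑ j, d i j * |x i s - x j s|`. -/
theorem stmt0 (n k : ℕ) (d : Fin n → Fin n → ℝ) (x : Fin n → Fin k → ℝ)
    (hd : ∀ i j, 0 ≤ d i j)
    (hx01 : ∀ i s, x i s = 0 ∨ x i s = 1)
    (hxsum : ∀ i, ∑ s, x i s = 1)
    (Y : Fin n → Fin k → Fin k → ℝ)
    (hY : ∀ i s t, s ≠ t → Y i s t = x i s * ∑ j, d i j * x j t)
    (i : Fin n) (s : Fin k) :
    (∑ t ∈ univ.filter (· ≠ s), Y i s t) + (∑ t ∈ univ.filter (· ≠ s), Y i t s)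
      = ∑ j, d i j * |x i s - x j s| := by
  have hfilter : ∀ j : Fin n, ∑ t ∈ univ.filter (· ≠ s), x j t = 1 - x j s := by
    intro j
    have h := hxsum j
    have : ∑ t ∈ univ.filter (· ≠ s), x j t + ∑ t ∈ univ.filter (¬ · ≠ s), x j t
        = ∑ t, x j t := Finset.sum_filter_add_sum_filter_not _ _ _
    have hs : univ.filter (fun t : Fin k => ¬ t ≠ s) = {s} := by
      ext t; simp
    rw [hs, Finset.sum_singleton, h] at this
    linarith
  have h1 : (∑ t ∈ univ.filter (· ≠ s), Y i s t)
      = ∑ j, d i j * (x i s * (1 - x j s)) := by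
    rw [Finset.sum_congr rfl (fun t ht => hY i s t (Ne.symm (Finset.mem_filter.mp ht).2))]
    rw [← Finset.mul_sum, Finset.sum_comm]
    rw [Finset.mul_sum]
    refine Finset.sum_congr rfl fun j _ => ?_
    rw [← Finset.mul_sum, Finset.mul_sum]
    have : ∑ t ∈ univ.filter (· ≠ s), d i j * x j t = d i j * (1 - x j s) := by
      rw [← Finset.mul_sum, hfilter]
    rw [this]; ring
  have h2 : (∑ t ∈ univ.filter (· ≠ s), Y i t s)
      = ∑ j, d i j * ((1 - x i s) * x j s) := by
    rw [Finset.sum_congr rfl (fun t ht => hY i t s ((Finset.mem_filter.mp ht).2))]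
    rw [← Finset.sum_mul, hfilter i, Finset.mul_sum]
    exact Finset.sum_congr rfl fun j _ => by ring
  rw [h1, h2, ← Finset.sum_add_distrib]
  refine Finset.sum_congr rfl fun j _ => ?_
  rcases hx01 i s with h | h <;> rcases hx01 j s with h' | h' <;>
    rw [h, h'] <;> norm_num
end

section
/- Let u be a random point uniformly distributed on the standard (k−1)-dimensional simplex Δ_k, and for x ∈ Δ_k let the geometric rounding assign x to vertex v_s if u lies in the polyhedron A_{x,s} with vertices {x, v_1, …, v_{s−1}, v_{s+1}, …, v_k}. Then for every x ∈ Δ_k and every coordinate s, the probability that x is rounded to vertex v_s equals x_s; equivalently, E[x̂] = x where x̂ is the rounded (vertex-valued) random vector. -/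
open MeasureTheory Set

/-- The `s`-th vertex of the standard simplex in `ℝ^k`. -/
def simplexVertex (k : ℕ) (s : Fin k) : Fin k → ℝ := fun t => if t = s then 1 else 0

/-- The rounding region `A_{x,s}`: the convex hull of `x` together with all
vertices of the simplex except `v_s`. -/
def roundRegion (k : ℕ) (x : Fin k → ℝ) (s : Fin k) : Set (Fin k → ℝ) :=
  convexHull ℝ ({x} ∪ {v | ∃ t : Fin k, t ≠ s ∧ v = simplexVertex k t})

namespace GR

variable {k : ℕ}

/-- Sum over the coordinates different from `s`. -/
lemma sum_subtype_ne (s : Fin k) (z : Fin k → ℝ) :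
    ∑ t : {t : Fin k // t ≠ s}, z t.val = (∑ t, z t) - z s := by
  have h1 : ∑ t ∈ ({s}ᶜ : Finset (Fin k)), z t = ∑ t : {t : Fin k // t ≠ s}, z t.val :=
    Finset.sum_subtype _ (fun x => by simp) z
  have h2 := Finset.sum_compl_add_sum ({s} : Finset (Fin k)) z
  rw [Finset.sum_singleton] at h2
  linarith

/-- The hyperplane containing the simplex. -/
def H (k : ℕ) : Set (Fin k → ℝ) := {z | ∑ t, z t = 1}

lemma measurableSet_H : MeasurableSet (H k) := by
  have : Continuous fun z : Fin k → ℝ => ∑ t, z t := by fun_prop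
  exact this.measurable (measurableSet_singleton (1:ℝ))

/-- Projection deleting coordinate `s`. -/
def psi (s : Fin k) : (Fin k → ℝ) →ₗ[ℝ] ({t : Fin k // t ≠ s} → ℝ) :=
  LinearMap.funLeft ℝ ℝ Subtype.val

lemma psi_apply (s : Fin k) (z : Fin k → ℝ) (t : {t : Fin k // t ≠ s}) :
    psi s z t = z t.val := rfl

lemma continuous_psi (s : Fin k) : Continuous (psi s) := by
  apply continuous_pi
  intro t
  exact (continuous_apply t.val)

/-- Linear part of the chart `φ`. -/
def Lmap (s : Fin k) : ({t : Fin k // t ≠ s} → ℝ) →ₗ[ℝ] (Fin k → ℝ) where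
  toFun y := fun t => if h : t = s then -∑ u, y u else y ⟨t, h⟩
  map_add' y z := by
    ext t
    by_cases h : t = s <;> simp [h, Finset.sum_add_distrib] <;> ring
  map_smul' c y := by
    ext t
    by_cases h : t = s <;> simp [h, Finset.mul_sum]

/-- The chart from `ℝ^{k-1}` onto the hyperplane `H`. -/
def phi (s : Fin k) (y : {t : Fin k // t ≠ s} → ℝ) : Fin k → ℝ :=
  simplexVertex k s + Lmap s y

lemma phi_apply (s : Fin k) (y : {t : Fin k // t ≠ s} → ℝ) (t : Fin k) :
    phi s y t = if h : t = s then 1 - ∑ u, y u else y ⟨t, h⟩ := by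
  by_cases h : t = s <;> simp [phi, Lmap, simplexVertex, h, LinearMap.coe_mk, sub_eq_add_neg]

lemma continuous_phi (s : Fin k) : Continuous (phi s) := by
  apply continuous_pi
  intro t
  simp only [phi_apply]
  by_cases h : t = s
  · simp only [h, dif_pos]
    exact continuous_const.sub (by fun_prop)
  · simp only [dif_neg h]
    exact continuous_apply _

lemma psi_phi (s : Fin k) (y : {t : Fin k // t ≠ s} → ℝ) : psi s (phi s y) = y := by
  ext t
  rw [psi_apply, phi_apply, dif_neg t.prop]

lemma phi_mem_H (s : Fin k) (y : {t : Fin k // t ≠ s} → ℝ) : phi s y ∈ H k := by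
  have : ∀ t : Fin k, phi s y t = if h : t = s then 1 - ∑ u, y u else y ⟨t, h⟩ := phi_apply s y
  show ∑ t, phi s y t = 1
  have hsum := sum_subtype_ne s (phi s y)
  have h1 : ∑ t : {t : Fin k // t ≠ s}, phi s y t.val = ∑ u, y u := by
    apply Finset.sum_congr rfl
    intro t _
    rw [phi_apply, dif_neg t.prop]
  have h2 : phi s y s = 1 - ∑ u, y u := by rw [phi_apply, dif_pos rfl]
  rw [h1, h2] at hsum
  linarith

lemma phi_psi (s : Fin k) {z : Fin k → ℝ} (hz : z ∈ H k) : phi s (psi s z) = z := by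
  ext t
  rw [phi_apply]
  by_cases h : t = s
  · subst h
    rw [dif_pos rfl]
    have hsum := sum_subtype_ne t z
    have : ∑ u : {u : Fin k // u ≠ t}, psi t z u = (∑ u, z u) - z t := by
      rw [← hsum]; rfl
    rw [this, hz]
    ring
  · rw [dif_neg h]; rfl


/-- The linear map sending `v_s` to `x` and fixing the other vertices. -/
def fmap (x : Fin k → ℝ) (s : Fin k) : (Fin k → ℝ) →ₗ[ℝ] (Fin k → ℝ) where
  toFun z := z + z s • (x - simplexVertex k s)
  map_add' y z := by ext t; simp [add_smul]; ring
  map_smul' c y := by ext t; simp [smul_smul]; ring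

lemma fmap_vertex (x : Fin k → ℝ) (s t : Fin k) :
    fmap x s (simplexVertex k t) = if t = s then x else simplexVertex k t := by
  by_cases h : t = s
  · subst h
    simp [fmap, simplexVertex]
  · have h0 : simplexVertex k t s = 0 := by simp [simplexVertex, Ne.symm h]
    simp only [fmap, LinearMap.coe_mk, AddHom.coe_mk, h0, zero_smul, add_zero, if_neg h]

lemma fmap_image_vertices (x : Fin k → ℝ) (s : Fin k) :
    fmap x s '' range (simplexVertex k)
      = {x} ∪ {v | ∃ t : Fin k, t ≠ s ∧ v = simplexVertex k t} := by
  ext v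
  constructor
  · rintro ⟨-, ⟨t, rfl⟩, rfl⟩
    rw [fmap_vertex]
    by_cases h : t = s
    · simp [h]
    · exact Or.inr ⟨t, h, by simp [h]⟩
  · rintro (rfl | ⟨t, ht, rfl⟩)
    · exact ⟨simplexVertex k s, mem_range_self s, by rw [fmap_vertex]; simp⟩
    · exact ⟨simplexVertex k t, mem_range_self t, by rw [fmap_vertex]; simp [ht]⟩

lemma fmap_image_simplex (x : Fin k → ℝ) (s : Fin k) :
    fmap x s '' stdSimplex ℝ (Fin k) = roundRegion k x s := by
  rw [← convexHull_basis_eq_stdSimplex, LinearMap.image_convexHull, roundRegion,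
    ← fmap_image_vertices x s]
  apply congrArg (convexHull ℝ)
  apply congrArg (Set.image (fmap x s))
  apply congrArg Set.range
  funext i j
  simp [simplexVertex, eq_comm]

lemma sum_subtype_ne' (s : Fin k) (z : Fin k → ℝ) :
    ∑ t : {t : Fin k // t ≠ s}, z t.val = (∑ t, z t) - z s := by
  have h1 : ∑ t ∈ ({s}ᶜ : Finset (Fin k)), z t = ∑ t : {t : Fin k // t ≠ s}, z t.val :=
    Finset.sum_subtype _ (fun x => by simp) z
  have h2 := Finset.sum_compl_add_sum ({s} : Finset (Fin k)) z
  rw [Finset.sum_singleton] at h2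
  linarith

lemma fmap_sum (x : Fin k → ℝ) (hx1 : ∑ t, x t = 1) (s : Fin k) (z : Fin k → ℝ) :
    ∑ t, fmap x s z t = ∑ t, z t := by
  simp only [fmap, LinearMap.coe_mk, AddHom.coe_mk, Pi.add_apply, Pi.smul_apply, Pi.sub_apply,
    smul_eq_mul]
  rw [Finset.sum_add_distrib, ← Finset.mul_sum]
  have : ∑ t, (x t - simplexVertex k s t) = 0 := by
    rw [Finset.sum_sub_distrib, hx1]
    simp [simplexVertex]
  rw [this]; ring

/-- The conjugated linear map on `ℝ^{k-1}`. -/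
def Mmap (x : Fin k → ℝ) (s : Fin k) :
    ({t : Fin k // t ≠ s} → ℝ) →ₗ[ℝ] ({t : Fin k // t ≠ s} → ℝ) where
  toFun y := fun t => y t - (∑ u, y u) * x t.val
  map_add' y z := by ext t; simp [Finset.sum_add_distrib]; ring
  map_smul' c y := by ext t; simp [← Finset.mul_sum]; ring

lemma det_Mmap (x : Fin k → ℝ) (hx1 : ∑ t, x t = 1) (s : Fin k) :
    LinearMap.det (Mmap x s) = x s := by
  classical
  rw [← LinearMap.det_toMatrix (Pi.basisFun ℝ {t : Fin k // t ≠ s})]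
  have : LinearMap.toMatrix (Pi.basisFun ℝ _) (Pi.basisFun ℝ _) (Mmap x s)
      = 1 + (Matrix.replicateCol Unit (fun t : {t : Fin k // t ≠ s} => -x t.val) : Matrix {t : Fin k // t ≠ s} Unit ℝ) * (Matrix.replicateRow Unit 1 : Matrix Unit {t : Fin k // t ≠ s} ℝ) := by
    ext i j
    rw [LinearMap.toMatrix_apply]
    simp [Mmap, Pi.basisFun_apply, Pi.basisFun_repr, Matrix.mul_apply, Matrix.one_apply,
      Pi.single_apply, Finset.sum_ite_eq]
    by_cases h : i = j <;> simp [h] <;> ring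
  rw [this, Matrix.det_one_add_replicateCol_mul_replicateRow]
  have : dotProduct (1 : {t : Fin k // t ≠ s} → ℝ)
      (fun t : {t : Fin k // t ≠ s} => -x t.val) = -∑ t : {t : Fin k // t ≠ s}, x t.val := by
    simp [dotProduct]
  rw [this, sum_subtype_ne' s x, hx1]
  ring

end GR


namespace GR
variable {k : ℕ}

lemma stdSimplex_subset_H : stdSimplex ℝ (Fin k) ⊆ H k := fun z hz => hz.2

lemma roundRegion_subset_H (x : Fin k → ℝ) (hx : x ∈ stdSimplex ℝ (Fin k)) (s : Fin k) :
    roundRegion k x s ⊆ H k := by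
  rw [← fmap_image_simplex x s]
  rintro - ⟨z, hz, rfl⟩
  show ∑ t, fmap x s z t = 1
  rw [fmap_sum x hx.2 s z, hz.2]

lemma sum_Lmap (s : Fin k) (a : {t : Fin k // t ≠ s} → ℝ) : ∑ t, Lmap s a t = 0 := by
  have h1 := sum_subtype_ne s (Lmap s a)
  have h2 : ∑ t : {t : Fin k // t ≠ s}, Lmap s a t.val = ∑ u, a u := by
    apply Finset.sum_congr rfl
    intro t _
    show (if h : (t : Fin k) = s then -∑ u, a u else a ⟨t, h⟩) = a t
    rw [dif_neg t.prop]
  have h3 : Lmap s a s = -∑ u, a u := by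
    show (if h : s = s then -∑ u, a u else a ⟨s, h⟩) = -∑ u, a u
    rw [dif_pos rfl]
  rw [h2, h3] at h1
  linarith

lemma psi_comp_add (s : Fin k) (a : {t : Fin k // t ≠ s} → ℝ) :
    (fun y => a + y) ∘ (psi s) = (psi s) ∘ (fun z => Lmap s a + z) := by
  funext z
  ext t
  show a t + z t.val = Lmap s a t.val + z t.val
  have : Lmap s a t.val = a t := by
    show (if h : (t : Fin k) = s then -∑ u, a u else a ⟨t, h⟩) = a t
    rw [dif_neg t.prop]
  rw [this]

lemma restrict_H_add_invariant (s : Fin k) (w : Fin k → ℝ) (hw : ∑ t, w t = 0) :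
    Measure.map (fun z => w + z) ((μH[(k:ℝ)-1] : Measure (Fin k → ℝ)).restrict (H k))
      = (μH[(k:ℝ)-1] : Measure (Fin k → ℝ)).restrict (H k) := by
  apply Measure.ext
  intro B hB
  rw [Measure.map_apply (measurable_const_add w) hB, Measure.restrict_apply hB,
    Measure.restrict_apply (measurable_const_add w hB)]
  have hset : (fun z => w + z) ⁻¹' B ∩ H k = (fun z => w + z) ⁻¹' (B ∩ H k) := by
    ext z
    simp only [mem_inter_iff, mem_preimage]
    have : z ∈ H k ↔ w + z ∈ H k := by
      simp only [H, mem_setOf_eq, Pi.add_apply, Finset.sum_add_distrib, hw, zero_add]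
    tauto
  rw [hset, measure_preimage_add]

end GR

/-- The probability that a uniform random point of the simplex lies in the region
`A_{x,s}` equals `x_s`: the `(k-1)`-dimensional volume of `A_{x,s}` is `x_s`
times the volume of the simplex. -/
theorem stmt3 (k : ℕ) (x : Fin k → ℝ) (hx : x ∈ stdSimplex ℝ (Fin k)) (s : Fin k) :
    μH[(k : ℝ) - 1] (roundRegion k x s)
      = ENNReal.ofReal (x s) * μH[(k : ℝ) - 1] (stdSimplex ℝ (Fin k)) := by
  classical
  have hk : 0 < k := s.pos
  have hd0 : (0:ℝ) ≤ (k : ℝ) - 1 := by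
    have : (1:ℝ) ≤ k := by exact_mod_cast hk
    linarith
  have hcard : ((Fintype.card {t : Fin k // t ≠ s} : ℕ) : ℝ) = (k : ℝ) - 1 := by
    have h1 : Fintype.card {t : Fin k // t ≠ s} = k - 1 := by
      have := Fintype.card_subtype_compl (fun t : Fin k => t = s)
      simpa [Fintype.card_subtype_eq] using this
    rw [h1, Nat.cast_sub hk]
    norm_num
  have hmuF : (μH[(k : ℝ) - 1] : Measure ({t : Fin k // t ≠ s} → ℝ)) = volume := by
    rw [← hcard]
    exact hausdorffMeasure_pi_real
  set μ : Measure (Fin k → ℝ) := μH[(k : ℝ) - 1] with hμ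
  set ν : Measure ({t : Fin k // t ≠ s} → ℝ) :=
    Measure.map (GR.psi s) (μ.restrict (GR.H k)) with hνdef
  have hψm : Measurable (GR.psi s) := (GR.continuous_psi s).measurable
  have hν_apply : ∀ B : Set ({t : Fin k // t ≠ s} → ℝ), MeasurableSet B →
      ν B = μ (GR.phi s '' B) := by
    intro B hB
    rw [hνdef, Measure.map_apply hψm hB, Measure.restrict_apply (hψm hB)]
    congr 1
    ext z
    constructor
    · rintro ⟨hzB, hzH⟩
      exact ⟨GR.psi s z, hzB, GR.phi_psi s hzH⟩
    · rintro ⟨y, hy, rfl⟩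
      refine ⟨?_, GR.phi_mem_H s y⟩
      rw [Set.mem_preimage, GR.psi_phi s y]
      exact hy
  haveI : Measure.IsAddLeftInvariant ν := by
    constructor
    intro a
    rw [hνdef, Measure.map_map (measurable_const_add a) hψm, GR.psi_comp_add,
      ← Measure.map_map hψm (measurable_const_add _),
      GR.restrict_H_add_invariant s _ (GR.sum_Lmap s a)]
  haveI : IsFiniteMeasureOnCompacts ν := by
    constructor
    intro K hK
    rw [hν_apply K hK.measurableSet]
    set Lc := LinearMap.toContinuousLinearMap (GR.Lmap s) with hLc
    have hlip : LipschitzWith (1 * ‖Lc‖₊) (GR.phi s) := by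
      have h1 : GR.phi s = (fun z => simplexVertex k s + z) ∘ Lc := rfl
      rw [h1]
      exact ((isometry_add_left (simplexVertex k s)).lipschitz).comp Lc.lipschitz
    have hle := hlip.hausdorffMeasure_image_le hd0 K
    refine lt_of_le_of_lt hle ?_
    rw [hmuF]
    exact ENNReal.mul_lt_top
      (ENNReal.rpow_lt_top_of_nonneg hd0 ENNReal.coe_ne_top) hK.measure_lt_top
  have hc : ν = ν.addHaarScalarFactor volume • volume :=
    Measure.isAddLeftInvariant_eq_smul ν volume
  have hS_sub : stdSimplex ℝ (Fin k) ⊆ GR.H k := GR.stdSimplex_subset_H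
  have hA_eq : roundRegion k x s = GR.fmap x s '' stdSimplex ℝ (Fin k) :=
    (GR.fmap_image_simplex x s).symm
  have hA_sub : roundRegion k x s ⊆ GR.H k := GR.roundRegion_subset_H x hx s
  have hScpt : IsCompact (stdSimplex ℝ (Fin k)) := isCompact_stdSimplex _ _
  have hfcont : Continuous (GR.fmap x s) := LinearMap.continuous_of_finiteDimensional _
  have hAcpt : IsCompact (roundRegion k x s) := hA_eq ▸ hScpt.image hfcont
  set BS := GR.psi s '' stdSimplex ℝ (Fin k) with hBSdef
  set BA := GR.psi s '' roundRegion k x s with hBAdef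
  have hBScpt : IsCompact BS := hScpt.image (GR.continuous_psi s)
  have hBAcpt : IsCompact BA := hAcpt.image (GR.continuous_psi s)
  have himg : ∀ T : Set (Fin k → ℝ), T ⊆ GR.H k → GR.phi s '' (GR.psi s '' T) = T := by
    intro T hT
    rw [Set.image_image]
    have h1 : ∀ z ∈ T, GR.phi s (GR.psi s z) = z := fun z hz => GR.phi_psi s (hT hz)
    rw [Set.image_congr h1, Set.image_id']
  have hmuS : μ (stdSimplex ℝ (Fin k)) = ν BS := by
    rw [hν_apply BS hBScpt.measurableSet, himg _ hS_sub]
  have hmuA : μ (roundRegion k x s) = ν BA := by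
    rw [hν_apply BA hBAcpt.measurableSet, himg _ hA_sub]
  have hBA : BA = (fun y => (fun t : {t : Fin k // t ≠ s} => x t.val) + GR.Mmap x s y) '' BS := by
    rw [hBAdef, hBSdef, hA_eq, Set.image_image, Set.image_image]
    apply Set.image_congr
    intro z hz
    ext t
    show GR.fmap x s z t.val = x t.val + GR.Mmap x s (GR.psi s z) t
    have h1 : GR.fmap x s z t.val = z t.val + z s * (x t.val - simplexVertex k s t.val) := rfl
    have h2 : simplexVertex k s t.val = 0 := by simp [simplexVertex, t.prop]
    have h3 : GR.Mmap x s (GR.psi s z) t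
        = z t.val - (∑ u : {u : Fin k // u ≠ s}, z u.val) * x t.val := rfl
    have h4 : ∑ u : {u : Fin k // u ≠ s}, z u.val = (∑ u, z u) - z s := GR.sum_subtype_ne s z
    have h5 : ∑ u, z u = 1 := hz.2
    rw [h1, h2, h3, h4, h5]
    ring
  have hvolBA : volume BA = ENNReal.ofReal (x s) * volume BS := by
    rw [hBA]
    have h1 : (fun y => (fun t : {t : Fin k // t ≠ s} => x t.val) + GR.Mmap x s y) '' BS
        = (fun y => (fun t : {t : Fin k // t ≠ s} => x t.val) + y) '' (GR.Mmap x s '' BS) :=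
      (Set.image_image _ _ _).symm
    rw [h1, Set.image_add_left, measure_preimage_add,
      Measure.addHaar_image_linearMap volume (GR.Mmap x s) BS,
      GR.det_Mmap x hx.2 s, abs_of_nonneg (hx.1 s)]
  rw [hmuA, hmuS, hc]
  simp only [Measure.smul_apply, smul_eq_mul, ENNReal.smul_def]
  rw [hvolBA]
  ring
end

section
/- The optimal value of LP2 (the relaxation of MILP2) is less than or equal to the optimal value of LP2' (LP2 augmented with the validity constraints Σ_{t≠s}Y^i_{st} + Σ_{t≠s}Y^i_{ts} = Σ_j d_{ij} y_{ijs}, |x_{is} − x_{js}| ≤ y_{ijs}), which is less than or equal to the optimal value of MILP2' over binary x; moreover every feasible binary solution of the FHSAP (with canonical flows) is feasible for LP2', so LP2' is a valid relaxation of FHSAP. -/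
open Finset

section

variable (n k : ℕ) (d : Fin n → Fin n → ℝ) (c : Fin n → Fin k → ℝ)
  (ch : Fin k → Fin k → ℝ)

/-- Objective of the flow formulation (MILP2 / LP2 and their variants). -/
def lp2Obj (x : Fin n → Fin k → ℝ) (Y : Fin n → Fin k → Fin k → ℝ) : ℝ :=
  (∑ i, ∑ s, c i s * ((∑ j, d i j) + (∑ j, d j i)) * x i s)
    + ∑ i, ∑ s, ∑ t ∈ univ.filter (· ≠ s), ch s t * Y i s t

/-- Feasibility for the relaxation LP2. -/
def lp2Feas (x : Fin n → Fin k → ℝ) (Y : Fin n → Fin k → Fin k → ℝ) : Prop :=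
  (∀ i s, 0 ≤ x i s) ∧ (∀ i, ∑ s, x i s = 1) ∧ (∀ i s t, 0 ≤ Y i s t) ∧
    (∀ i s, (∑ t ∈ univ.filter (· ≠ s), Y i s t)
        - (∑ t ∈ univ.filter (· ≠ s), Y i t s)
      = (∑ j, d i j) * x i s - ∑ j, d i j * x j s)

/-- Feasibility for LP2', i.e. LP2 augmented with the validity constraints. -/
def lp2'Feas (x : Fin n → Fin k → ℝ) (Y : Fin n → Fin k → Fin k → ℝ)
    (y : Fin n → Fin n → Fin k → ℝ) : Prop :=
  lp2Feas n k d x Y ∧ (∀ i j s, 0 ≤ y i j s) ∧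
    (∀ i j s, x i s - x j s ≤ y i j s) ∧ (∀ i j s, x j s - x i s ≤ y i j s) ∧
    (∀ i s, (∑ t ∈ univ.filter (· ≠ s), Y i s t)
        + (∑ t ∈ univ.filter (· ≠ s), Y i t s) = ∑ j, d i j * y i j s)

/-- Binary (integrality) constraint on the assignment variables. -/
def binAssign (x : Fin n → Fin k → ℝ) : Prop := ∀ i s, x i s = 0 ∨ x i s = 1

end

lemma canonFeas (n k : ℕ) (d : Fin n → Fin n → ℝ) (hd : ∀ i j, 0 ≤ d i j)
    (x : Fin n → Fin k → ℝ) (hb : ∀ i s, x i s = 0 ∨ x i s = 1)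
    (hs : ∀ i, ∑ s, x i s = 1) :
    lp2'Feas n k d x (fun i s t => x i s * ∑ j, d i j * x j t)
      (fun i j s => |x i s - x j s|) := by
  have hx0 : ∀ i s, 0 ≤ x i s := by
    intro i s; rcases hb i s with h | h <;> simp [h]
  have key : ∀ j s, ∑ t ∈ univ.filter (· ≠ s), x j t = 1 - x j s := by
    intro j s
    rw [Finset.filter_ne', Finset.sum_erase_eq_sub (mem_univ s), hs]
  have hA : ∀ i s, (∑ t ∈ univ.filter (· ≠ s), x i s * ∑ j, d i j * x j t)
      = x i s * ∑ j, d i j * (1 - x j s) := by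
    intro i s
    rw [← Finset.mul_sum, Finset.sum_comm]
    congr 1
    refine Finset.sum_congr rfl fun j _ => ?_
    rw [← Finset.mul_sum, key j s]
  have hB : ∀ i s, (∑ t ∈ univ.filter (· ≠ s), x i t * ∑ j, d i j * x j s)
      = (1 - x i s) * ∑ j, d i j * x j s := by
    intro i s
    rw [← Finset.sum_mul, key i s]
  have hsplit : ∀ i s, (∑ j, d i j * (1 - x j s))
      = (∑ j, d i j) - ∑ j, d i j * x j s := by
    intro i s
    rw [← Finset.sum_sub_distrib]
    exact Finset.sum_congr rfl fun j _ => by ring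
  refine ⟨⟨hx0, hs, ?_, ?_⟩, ?_, ?_, ?_, ?_⟩
  · intro i s t
    exact mul_nonneg (hx0 i s) (Finset.sum_nonneg fun j _ =>
      mul_nonneg (hd i j) (hx0 j t))
  · intro i s
    rw [hA, hB, hsplit]
    ring
  · intro i j s; exact abs_nonneg _
  · intro i j s; exact le_abs_self _
  · intro i j s; dsimp only; rw [abs_sub_comm]; exact le_abs_self _
  · intro i s
    rw [hA, hB, Finset.mul_sum, Finset.mul_sum, ← Finset.sum_add_distrib]
    dsimp only
    refine Finset.sum_congr rfl fun j _ => ?_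
    rcases hb i s with h1 | h1 <;> rcases hb j s with h2 | h2 <;>
      rw [h1, h2] <;> norm_num

lemma objNonneg (n k : ℕ) (d : Fin n → Fin n → ℝ) (c : Fin n → Fin k → ℝ)
    (ch : Fin k → Fin k → ℝ)
    (hd : ∀ i j, 0 ≤ d i j) (hc : ∀ i s, 0 ≤ c i s) (hch : ∀ s t, 0 ≤ ch s t)
    (x : Fin n → Fin k → ℝ) (Y : Fin n → Fin k → Fin k → ℝ)
    (hx : ∀ i s, 0 ≤ x i s) (hY : ∀ i s t, 0 ≤ Y i s t) :
    0 ≤ lp2Obj n k d c ch x Y := by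
  unfold lp2Obj
  refine add_nonneg ?_ ?_
  · refine Finset.sum_nonneg fun i _ => Finset.sum_nonneg fun s _ => ?_
    exact mul_nonneg (mul_nonneg (hc i s) (add_nonneg
      (Finset.sum_nonneg fun j _ => hd i j)
      (Finset.sum_nonneg fun j _ => hd j i))) (hx i s)
  · refine Finset.sum_nonneg fun i _ => Finset.sum_nonneg fun s _ =>
      Finset.sum_nonneg fun t _ => mul_nonneg (hch s t) (hY i s t)

/-- `opt LP2 ≤ opt LP2' ≤ opt MILP2'`, and every binary FHSAP assignment with
canonical flows is feasible for LP2', so LP2' is a valid relaxation of FHSAP. -/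
theorem stmt11 (n k : ℕ) (hk : 0 < k) (d : Fin n → Fin n → ℝ)
    (c : Fin n → Fin k → ℝ) (ch : Fin k → Fin k → ℝ)
    (hd : ∀ i j, 0 ≤ d i j) (hc : ∀ i s, 0 ≤ c i s) (hch : ∀ s t, 0 ≤ ch s t) :
    (sInf {v : ℝ | ∃ x Y, lp2Feas n k d x Y ∧ v = lp2Obj n k d c ch x Y}
        ≤ sInf {v : ℝ | ∃ x Y y, lp2'Feas n k d x Y y ∧ v = lp2Obj n k d c ch x Y})
    ∧ (sInf {v : ℝ | ∃ x Y y, lp2'Feas n k d x Y y ∧ v = lp2Obj n k d c ch x Y}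
        ≤ sInf {v : ℝ | ∃ x Y y, lp2'Feas n k d x Y y ∧ binAssign n k x
            ∧ v = lp2Obj n k d c ch x Y})
    ∧ (∀ x : Fin n → Fin k → ℝ, binAssign n k x → (∀ i, ∑ s, x i s = 1) →
        lp2'Feas n k d x (fun i s t => x i s * ∑ j, d i j * x j t)
          (fun i j s => |x i s - x j s|)) := by
  -- canonical binary witness
  set x0 : Fin n → Fin k → ℝ := fun _ s => if s = ⟨0, hk⟩ then 1 else 0 with hx0def
  have hb0 : binAssign n k x0 := by
    intro i s; by_cases h : s = ⟨0, hk⟩ <;> simp [hx0def, h]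
  have hs0 : ∀ i, ∑ s, x0 i s = 1 := by
    intro i; simp [hx0def]
  have hfeas0 := canonFeas n k d hd x0 hb0 hs0
  set Y0 : Fin n → Fin k → Fin k → ℝ := fun i s t => x0 i s * ∑ j, d i j * x0 j t
  set y0 : Fin n → Fin n → Fin k → ℝ := fun i j s => |x0 i s - x0 j s|
  have hmem2 : lp2Obj n k d c ch x0 Y0 ∈
      {v : ℝ | ∃ x Y y, lp2'Feas n k d x Y y ∧ v = lp2Obj n k d c ch x Y} :=
    ⟨x0, Y0, y0, hfeas0, rfl⟩
  have hmem3 : lp2Obj n k d c ch x0 Y0 ∈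
      {v : ℝ | ∃ x Y y, lp2'Feas n k d x Y y ∧ binAssign n k x
        ∧ v = lp2Obj n k d c ch x Y} :=
    ⟨x0, Y0, y0, hfeas0, hb0, rfl⟩
  have hbdd1 : BddBelow {v : ℝ | ∃ x Y, lp2Feas n k d x Y ∧ v = lp2Obj n k d c ch x Y} := by
    refine ⟨0, fun v hv => ?_⟩
    obtain ⟨x, Y, ⟨hx, -, hY, -⟩, rfl⟩ := hv
    exact objNonneg n k d c ch hd hc hch x Y hx hY
  have hbdd2 : BddBelow {v : ℝ | ∃ x Y y, lp2'Feas n k d x Y y ∧ v = lp2Obj n k d c ch x Y} := by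
    refine ⟨0, fun v hv => ?_⟩
    obtain ⟨x, Y, y, ⟨⟨hx, -, hY, -⟩, -⟩, rfl⟩ := hv
    exact objNonneg n k d c ch hd hc hch x Y hx hY
  refine ⟨csInf_le_csInf hbdd1 ⟨_, hmem2⟩ ?_, csInf_le_csInf hbdd2 ⟨_, hmem3⟩ ?_,
    fun x hb hs => canonFeas n k d hd x hb hs⟩
  · rintro v ⟨x, Y, y, ⟨hF, -⟩, rfl⟩
    exact ⟨x, Y, hF, rfl⟩
  · rintro v ⟨x, Y, y, hF, -, rfl⟩
    exact ⟨x, Y, y, hF, rfl⟩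
end

section
/- Suppose for every pair of cities d_{ij} ≥ 0, every x feasible for MILP2 with binary assignment variables and nonnegative flows Y achieving the constraints gives objective value equal to the true FHSAP routing cost when flows are chosen canonically; consequently, the optimal value of MILP2 is a lower bound on the optimal value of FHSAP-QP: min MILP2 ≤ min FHSAP-QP. -/
open Finset

section

variable (n k : ℕ) (d : Fin n → Fin n → ℝ) (c : Fin n → Fin k → ℝ)
  (ch : Fin k → Fin k → ℝ)

/-- FHSAP-QP objective. -/
def qpObj (x : Fin n → Fin k → ℝ) : ℝ :=
  ∑ i, ∑ j, d i j * ((∑ s, c i s * x i s) + (∑ t, c j t * x j t)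
    + ∑ s, ∑ t, ch s t * x i s * x j t)

/-- MILP2 objective. -/
def milp2Obj (x : Fin n → Fin k → ℝ) (Y : Fin n → Fin k → Fin k → ℝ) : ℝ :=
  (∑ i, ∑ s, c i s * ((∑ j, d i j) + (∑ j, d j i)) * x i s)
    + ∑ i, ∑ s, ∑ t ∈ univ.filter (· ≠ s), ch s t * Y i s t

/-- MILP2 feasibility (binary assignment, nonnegative flows, conservation). -/
def milp2Feas (x : Fin n → Fin k → ℝ) (Y : Fin n → Fin k → Fin k → ℝ) : Prop :=
  (∀ i s, x i s = 0 ∨ x i s = 1) ∧ (∀ i, ∑ s, x i s = 1) ∧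
    (∀ i s t, 0 ≤ Y i s t) ∧
    (∀ i s, (∑ t ∈ univ.filter (· ≠ s), Y i s t)
        - (∑ t ∈ univ.filter (· ≠ s), Y i t s)
      = (∑ j, d i j) * x i s - ∑ j, d i j * x j s)

end

lemma sum_filter_ne_aux {k : ℕ} (s : Fin k) (f : Fin k → ℝ) :
    ∑ t ∈ univ.filter (· ≠ s), f t = (∑ t, f t) - f s := by
  rw [Finset.filter_ne', Finset.sum_erase_eq_sub (Finset.mem_univ s)]

/-- For every binary assignment `x`, the canonical flows are MILP2-feasible and
the MILP2 objective equals the FHSAP-QP objective; consequently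
`min MILP2 ≤ min FHSAP-QP`. -/
theorem stmt14 (n k : ℕ) (hk : 0 < k) (d : Fin n → Fin n → ℝ)
    (c : Fin n → Fin k → ℝ) (ch : Fin k → Fin k → ℝ)
    (hd : ∀ i j, 0 ≤ d i j) (hc : ∀ i s, 0 ≤ c i s)
    (hch : ∀ s t, 0 ≤ ch s t) (hsym : ∀ s t, ch s t = ch t s)
    (hdiag : ∀ s, ch s s = 0) :
    (∀ x : Fin n → Fin k → ℝ,
      (∀ i s, x i s = 0 ∨ x i s = 1) → (∀ i, ∑ s, x i s = 1) →
        milp2Feas n k d x (fun i s t => x i s * ∑ j, d i j * x j t)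
        ∧ milp2Obj n k d c ch x (fun i s t => x i s * ∑ j, d i j * x j t)
            = qpObj n k d c ch x)
    ∧ sInf {v : ℝ | ∃ x Y, milp2Feas n k d x Y ∧ v = milp2Obj n k d c ch x Y}
        ≤ sInf {v : ℝ | ∃ x : Fin n → Fin k → ℝ,
            (∀ i s, x i s = 0 ∨ x i s = 1) ∧ (∀ i, ∑ s, x i s = 1)
            ∧ v = qpObj n k d c ch x} := by
  have main : ∀ x : Fin n → Fin k → ℝ,
      (∀ i s, x i s = 0 ∨ x i s = 1) → (∀ i, ∑ s, x i s = 1) →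
        milp2Feas n k d x (fun i s t => x i s * ∑ j, d i j * x j t)
        ∧ milp2Obj n k d c ch x (fun i s t => x i s * ∑ j, d i j * x j t)
            = qpObj n k d c ch x := by
    intro x hbin hrow
    have hx0 : ∀ i s, 0 ≤ x i s := by
      intro i s; rcases hbin i s with h | h <;> rw [h] <;> norm_num
    have hA : ∀ i, ∑ t, ∑ j, d i j * x j t = ∑ j, d i j := by
      intro i
      rw [Finset.sum_comm]
      simp only [← Finset.mul_sum]
      simp [hrow]
    constructor
    · -- feasibility
      refine ⟨hbin, hrow, ?_, ?_⟩
      · intro i s t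
        exact mul_nonneg (hx0 i s)
          (Finset.sum_nonneg fun j _ => mul_nonneg (hd i j) (hx0 j t))
      · intro i s
        simp only [sum_filter_ne_aux]
        have h1 : ∑ t, x i s * ∑ j, d i j * x j t = x i s * ∑ j, d i j := by
          rw [← Finset.mul_sum, hA]
        have h2 : ∑ t, x i t * ∑ j, d i j * x j s
            = ∑ j, d i j * x j s := by
          rw [← Finset.sum_mul, hrow, one_mul]
        rw [h1, h2]; ring
    · -- objective equality
      have hM : milp2Obj n k d c ch x (fun i s t => x i s * ∑ j, d i j * x j t)
          = (∑ i, ∑ j, ∑ s, (d i j + d j i) * (c i s * x i s))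
            + ∑ i, ∑ j, ∑ s, ∑ t, d i j * (ch s t * (x i s * x j t)) := by
        unfold milp2Obj
        congr 1
        · -- linear part
          refine Finset.sum_congr rfl fun i _ => ?_
          rw [Finset.sum_comm]
          refine Finset.sum_congr rfl fun s _ => ?_
          rw [← Finset.sum_add_distrib, Finset.mul_sum, Finset.sum_mul]
          exact Finset.sum_congr rfl fun j _ => by ring
        · -- flow part
          refine Finset.sum_congr rfl fun i _ => ?_
          simp only [sum_filter_ne_aux, hdiag, zero_mul, sub_zero]
          calc ∑ s, ∑ t, ch s t * (x i s * ∑ j, d i j * x j t)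
              = ∑ s, ∑ t, ∑ j, d i j * (ch s t * (x i s * x j t)) := by
                refine Finset.sum_congr rfl fun s _ => Finset.sum_congr rfl fun t _ => ?_
                rw [Finset.mul_sum, Finset.mul_sum]
                exact Finset.sum_congr rfl fun j _ => by ring
            _ = ∑ s, ∑ j, ∑ t, d i j * (ch s t * (x i s * x j t)) :=
                Finset.sum_congr rfl fun s _ => Finset.sum_comm
            _ = ∑ j, ∑ s, ∑ t, d i j * (ch s t * (x i s * x j t)) :=
                Finset.sum_comm
      have hQ : qpObj n k d c ch x
          = (∑ i, ∑ j, ∑ s, (d i j + d j i) * (c i s * x i s))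
            + ∑ i, ∑ j, ∑ s, ∑ t, d i j * (ch s t * (x i s * x j t)) := by
        unfold qpObj
        have : ∀ i j : Fin n,
            d i j * ((∑ s, c i s * x i s) + (∑ t, c j t * x j t)
              + ∑ s, ∑ t, ch s t * x i s * x j t)
            = (∑ s, d i j * (c i s * x i s)) + (∑ t, d i j * (c j t * x j t))
              + ∑ s, ∑ t, d i j * (ch s t * (x i s * x j t)) := by
          intro i j
          rw [mul_add, mul_add, Finset.mul_sum, Finset.mul_sum, Finset.mul_sum]
          congr 1
          refine Finset.sum_congr rfl fun s _ => ?_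
          rw [Finset.mul_sum]
          exact Finset.sum_congr rfl fun t _ => by ring
        simp only [this, Finset.sum_add_distrib]
        congr 1
        have hswap : ∑ i, ∑ j, ∑ t, d i j * (c j t * x j t)
            = ∑ i, ∑ j, ∑ s, d j i * (c i s * x i s) := Finset.sum_comm
        rw [hswap, ← Finset.sum_add_distrib]
        refine Finset.sum_congr rfl fun i _ => ?_
        rw [← Finset.sum_add_distrib]
        refine Finset.sum_congr rfl fun j _ => ?_
        rw [← Finset.sum_add_distrib]
        exact Finset.sum_congr rfl fun s _ => by ring
      rw [hM, hQ]
  refine ⟨main, ?_⟩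
  set A := {v : ℝ | ∃ x Y, milp2Feas n k d x Y ∧ v = milp2Obj n k d c ch x Y}
  set B := {v : ℝ | ∃ x : Fin n → Fin k → ℝ,
      (∀ i s, x i s = 0 ∨ x i s = 1) ∧ (∀ i, ∑ s, x i s = 1)
      ∧ v = qpObj n k d c ch x}
  have hBA : B ⊆ A := by
    rintro v ⟨x, hbin, hrow, rfl⟩
    obtain ⟨hf, he⟩ := main x hbin hrow
    exact ⟨x, _, hf, he.symm⟩
  have hBne : B.Nonempty := by
    refine ⟨_, fun i s => if s = ⟨0, hk⟩ then (1 : ℝ) else 0, ?_, ?_, rfl⟩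
    · intro i s; by_cases h : s = ⟨0, hk⟩ <;> simp [h]
    · intro i; simp
  have hAbdd : BddBelow A := by
    refine ⟨0, ?_⟩
    rintro v ⟨x, Y, ⟨hbin, hrow, hY, _⟩, rfl⟩
    have hx0 : ∀ i s, 0 ≤ x i s := by
      intro i s; rcases hbin i s with h | h <;> rw [h] <;> norm_num
    have h1 : 0 ≤ ∑ i, ∑ s, c i s * ((∑ j, d i j) + (∑ j, d j i)) * x i s := by
      refine Finset.sum_nonneg fun i _ => Finset.sum_nonneg fun s _ => ?_
      apply mul_nonneg _ (hx0 i s)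
      apply mul_nonneg (hc i s)
      exact add_nonneg (Finset.sum_nonneg fun j _ => hd i j)
        (Finset.sum_nonneg fun j _ => hd j i)
    have h2 : 0 ≤ ∑ i, ∑ s, ∑ t ∈ univ.filter (· ≠ s), ch s t * Y i s t :=
      Finset.sum_nonneg fun i _ => Finset.sum_nonneg fun s _ =>
        Finset.sum_nonneg fun t _ => mul_nonneg (hch s t) (hY i s t)
    exact add_nonneg h1 h2
  exact csInf_le_csInf hAbdd hBne hBA
end
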